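/- In the weighted bipartite matching formulation, let M be the unique maximum-weight saturated matching on all n items and let M_i be the unique maximum-weight saturated matching on the first i items. If every item matched by M arrives after position i₀, and an algorithm retains each item c_j (j > i₀) whenever c_j is matched in M_j, then every item matched by M is retained. -/
import Mathlib


open Finset

/-- `g` is a saturated matching of the constraint vertices `L` into the first
`i` items (where `none` means a dummy zero-value item): each matched item has
arrived (index `< i`) and satisfies the property of its constraint vertex, and
no item is used twice. -/
def IsPrefixMatching {L : Type*} {n : ℕ} (P : L → Fin n → Prop) (i : ℕ)
    (g : L → Option (Fin n)) : Prop :=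
  (∀ l c, g l = some c → P l c ∧ (c : ℕ) < i) ∧
  ∀ l l' c, g l = some c → g l' = some c → l = l'

/-- The value of a matching (dummies have value 0). -/
def matchingValue {L : Type*} [Fintype L] {n : ℕ} (w : L → Fin n → ℝ)
    (g : L → Option (Fin n)) : ℝ :=
  ∑ l, (g l).elim 0 (w l)

/-- if `M i` is, for each prefix length `i`, the unique
maximum-weight saturated matching on the first `i` items, and every item
matched by the global optimum `M n` arrives after position `i₀`, then every
item `c` matched by `M n` is matched in `M (c+1)` at its arrival time — hence
is retained by the greedy rule. -/
theorem stmt6 {L : Type*} [Fintype L] (n : ℕ) (P : L → Fin n → Prop)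
    (w : L → Fin n → ℝ) (hw : ∀ l c, 0 ≤ w l c ∧ w l c ≤ 1)
    (M : ℕ → L → Option (Fin n))
    (hM : ∀ i, IsPrefixMatching P i (M i))
    (hMopt : ∀ i g, IsPrefixMatching P i g → matchingValue w g ≤ matchingValue w (M i))
    (hMuniq : ∀ i g, IsPrefixMatching P i g →
      matchingValue w g = matchingValue w (M i) → g = M i)
    (i₀ : ℕ)
    (hlate : ∀ l c, M n l = some c → i₀ ≤ (c : ℕ)) :
    ∀ c : Fin n, (∃ l, M n l = some c) → ∃ l, M ((c : ℕ) + 1) l = some c := by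
  classical
  rintro c ⟨l₀, hl₀⟩
  by_contra hcon
  push_neg at hcon
  set j : ℕ := (c : ℕ) + 1 with hj
  set f := M n with hf
  set g := M j with hg
  have hjn : j ≤ n := c.isLt
  have hfP := (hM n).1
  have hfinj := (hM n).2
  have hgP := (hM j).1
  have hginj := (hM j).2
  -- the alternating-path step relation: l' follows l if the item matched to l
  -- in g is matched to l' in f
  set Step : L → L → Prop := fun l l' => ∃ d, g l = some d ∧ f l' = some d
    with hStepdef
  -- the set of constraint vertices on the alternating path starting at l₀
  set S : L → Prop := fun l => Relation.ReflTransGen Step l₀ l with hSdef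
  have hSl₀ : S l₀ := Relation.ReflTransGen.refl
  -- no step leads back to l₀, since the f-item of l₀ is c, unmatched in g
  have hnotl₀ : ∀ l, ¬ Step l l₀ := by
    rintro l ⟨d, hgl, hfl⟩
    have hdc : d = c := by
      have := hfl.symm.trans hl₀
      exact Option.some.inj this
    exact hcon l (hdc ▸ hgl)
  -- steps are backward-unique
  have hback : ∀ l m l', Step l l' → Step m l' → l = m := by
    rintro l m l' ⟨d, hgl, hfl'⟩ ⟨e, hgm, hfl'2⟩
    have hde : d = e := Option.some.inj (hfl'.symm.trans hfl'2)
    exact hginj l m d hgl (hde ▸ hgm)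
  -- predecessor on the path
  have hpred : ∀ l', S l' → l' ≠ l₀ → ∃ l, S l ∧ Step l l' := by
    intro l' hl' hne
    rcases Relation.ReflTransGen.cases_tail hl' with h | ⟨b, hb, hstep⟩
    · exact absurd h hne
    · exact ⟨b, hb, hstep⟩
  -- the swapped matchings
  set f' : L → Option (Fin n) := fun l => if S l then g l else f l with hf'
  set g' : L → Option (Fin n) := fun l => if S l then f l else g l with hg'
  -- f' is a prefix matching on n items
  have hf'pm : IsPrefixMatching P n f' := by
    constructor
    · intro l d hld
      by_cases h : S l
      · rw [hf'] at hld; simp only [h, if_true] at hld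
        exact ⟨(hgP l d hld).1, lt_of_lt_of_le (hgP l d hld).2 hjn⟩
      · rw [hf'] at hld; simp only [h, if_false] at hld
        exact hfP l d hld
    · intro l l' d hld hl'd
      by_cases h : S l <;> by_cases h' : S l' <;>
        rw [hf'] at hld hl'd <;>
        simp only [h, h', if_true, if_false] at hld hl'd
      · exact hginj l l' d hld hl'd
      · exact absurd (Relation.ReflTransGen.tail h ⟨d, hld, hl'd⟩) h'
      · exact absurd (Relation.ReflTransGen.tail h' ⟨d, hl'd, hld⟩) h
      · exact hfinj l l' d hld hl'd
  -- g' is a prefix matching on the first j items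
  have hg'pm : IsPrefixMatching P j g' := by
    constructor
    · intro l d hld
      by_cases h : S l
      · rw [hg'] at hld; simp only [h, if_true] at hld
        refine ⟨(hfP l d hld).1, ?_⟩
        by_cases hl : l = l₀
        · subst hl
          have : d = c := Option.some.inj (hld.symm.trans hl₀)
          subst this
          exact Nat.lt_succ_self _
        · obtain ⟨m, hmS, e, hgm, hfl⟩ := hpred l h hl
          have : e = d := Option.some.inj (hfl.symm.trans hld)
          subst this
          exact (hgP m e hgm).2
      · rw [hg'] at hld; simp only [h, if_false] at hld
        exact hgP l d hld
    · intro l l' d hld hl'd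
      by_cases h : S l <;> by_cases h' : S l' <;>
        rw [hg'] at hld hl'd <;>
        simp only [h, h', if_true, if_false] at hld hl'd
      · exact hfinj l l' d hld hl'd
      · -- l ∈ S with f l = some d, l' ∉ S with g l' = some d : Step l' l
        exfalso
        have hstep : Step l' l := ⟨d, hl'd, hld⟩
        by_cases hl : l = l₀
        · exact hnotl₀ l' (hl ▸ hstep)
        · obtain ⟨m, hmS, hmstep⟩ := hpred l h hl
          exact h' ((hback m l' l hmstep hstep) ▸ hmS)
      · exfalso
        have hstep : Step l l' := ⟨d, hld, hl'd⟩
        by_cases hl : l' = l₀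
        · exact hnotl₀ l (hl ▸ hstep)
        · obtain ⟨m, hmS, hmstep⟩ := hpred l' h' hl
          exact h ((hback m l l' hmstep hstep) ▸ hmS)
      · exact hginj l l' d hld hl'd
  -- total value is preserved by the swap
  have hsum : matchingValue w f' + matchingValue w g'
      = matchingValue w f + matchingValue w g := by
    unfold matchingValue
    rw [← Finset.sum_add_distrib, ← Finset.sum_add_distrib]
    refine Finset.sum_congr rfl fun l _ => ?_
    by_cases h : S l
    · rw [hf', hg']; simp only [h, if_true]; ring
    · rw [hf', hg']; simp only [h, if_false]
  have h1 : matchingValue w f' ≤ matchingValue w f := hMopt n f' hf'pm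
  have h2 : matchingValue w g' ≤ matchingValue w g := hMopt j g' hg'pm
  have heq : matchingValue w g' = matchingValue w g := by linarith
  have : g' = M j := hMuniq j g' hg'pm heq
  have hat : g' l₀ = g l₀ := by rw [this]
  rw [hg'] at hat
  simp only [hSl₀, if_true] at hat
  exact hcon l₀ (hat ▸ hl₀)
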